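/- arXiv:1505.04166 — 2 statements merged into one kernel-verified Lean document; each statement's English description precedes it below -/
import Mathlib

section
/- (Weighted flat Bochner formula.) Let ρ : ℝⁿ → ℝ be smooth (C³) and Δ_ρ f = Δf − ⟨∇ρ, ∇f⟩. Then for every smooth (C³) function f : ℝⁿ → ℝ, the iterated carré du champ satisfies Γ₂(Δ_ρ, f, f) := (1/2)Δ_ρ(‖∇f‖²) − ⟨∇f, ∇(Δ_ρ f)⟩ = ‖Hess f‖² + Hess ρ(∇f, ∇f) pointwise, where ‖Hess f‖² is the squared Frobenius norm of the Hessian of f and Hess ρ(∇f,∇f) = Σ_{i,j} (∂²ρ/∂x_i∂x_j)(∂f/∂x_i)(∂f/∂x_j). -/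
open scoped RealInnerProductSpace

/-- The Euclidean Laplacian: the trace of the Hessian, i.e. the sum of pure second
partial derivatives. -/
noncomputable def eLap {n : ℕ} (f : EuclideanSpace ℝ (Fin n) → ℝ)
    (x : EuclideanSpace ℝ (Fin n)) : ℝ :=
  ∑ i, fderiv ℝ (fun y => fderiv ℝ f y (EuclideanSpace.single i 1)) x (EuclideanSpace.single i 1)

/-- The carré du champ of an operator `L`: `Γ(L,u,v) = (1/2)(L(uv) − (Lu)v − u(Lv))`. -/
noncomputable def carre {n : ℕ}
    (L : (EuclideanSpace ℝ (Fin n) → ℝ) → EuclideanSpace ℝ (Fin n) → ℝ)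
    (u v : EuclideanSpace ℝ (Fin n) → ℝ) (z : EuclideanSpace ℝ (Fin n)) : ℝ :=
  (1/2) * (L (fun w => u w * v w) z - L u z * v z - u z * L v z)

/-- The iterated carré du champ (diagonal):
`Γ₂(L,f,f) = (1/2)(L(Γ(L,f,f)) − 2Γ(L,Lf,f))`. -/
noncomputable def gamma2 {n : ℕ}
    (L : (EuclideanSpace ℝ (Fin n) → ℝ) → EuclideanSpace ℝ (Fin n) → ℝ)
    (f : EuclideanSpace ℝ (Fin n) → ℝ) (z : EuclideanSpace ℝ (Fin n)) : ℝ :=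
  (1/2) * (L (carre L f f) z - 2 * carre L (L f) f z)

/-- The weighted Laplacian `Δ_ρ f = Δf − ⟨∇ρ, ∇f⟩`. -/
noncomputable def wLap {n : ℕ} (ρ f : EuclideanSpace ℝ (Fin n) → ℝ)
    (z : EuclideanSpace ℝ (Fin n)) : ℝ :=
  eLap f z - ⟪gradient ρ z, gradient f z⟫

/-- The Hessian matrix of second partial derivatives. -/
noncomputable def hess {n : ℕ} (f : EuclideanSpace ℝ (Fin n) → ℝ)
    (z : EuclideanSpace ℝ (Fin n)) (i j : Fin n) : ℝ :=
  fderiv ℝ (fun y => fderiv ℝ f y (EuclideanSpace.single j 1)) z (EuclideanSpace.single i 1)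

/-- The test function `f_{x,y}(z) = (1/2)(d²(x,y) − d²(y,z) + d²(z,x))`. -/
noncomputable def testFn {n : ℕ} (x y z : EuclideanSpace ℝ (Fin n)) : ℝ :=
  (1/2) * (dist x y ^ 2 - dist y z ^ 2 + dist z x ^ 2)

/-- The coarse Ricci curvature of an operator `L`:
`Ric_L(x,y) = Γ₂(L, f_{x,y}, f_{x,y})(x)`. -/
noncomputable def cRic {n : ℕ}
    (L : (EuclideanSpace ℝ (Fin n) → ℝ) → EuclideanSpace ℝ (Fin n) → ℝ)
    (x y : EuclideanSpace ℝ (Fin n)) : ℝ :=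
  gamma2 L (testFn x y) x


noncomputable section
variable {n : ℕ}

local notation "E" => EuclideanSpace ℝ (Fin n)

def ee (i : Fin n) : EuclideanSpace ℝ (Fin n) := EuclideanSpace.single i 1

def pd (g : EuclideanSpace ℝ (Fin n) → ℝ) (i : Fin n) (y : EuclideanSpace ℝ (Fin n)) : ℝ :=
  fderiv ℝ g y (ee i)

-- inner with gradient
lemma inner_gradient (g : E → ℝ) (x : E) (v : E) :
    ⟪gradient g x, v⟫ = fderiv ℝ g x v := by
  simp only [gradient]
  exact InnerProductSpace.toDual_symm_apply

lemma gradient_apply (g : E → ℝ) (x : E) (i : Fin n) :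
    gradient g x i = fderiv ℝ g x (ee i) := by
  have : ⟪gradient g x, ee i⟫ = fderiv ℝ g x (ee i) := by
    simp only [gradient]
    exact InnerProductSpace.toDual_symm_apply
  rw [← this, ee, EuclideanSpace.inner_single_right]; simp

lemma inner_gradients (u v : E → ℝ) (x : E) :
    ⟪gradient u x, gradient v x⟫ = ∑ i, pd u i x * pd v i x := by
  rw [PiLp.inner_apply]
  simp [gradient_apply, pd, RCLike.inner_apply]
  exact Finset.sum_congr rfl fun i _ => mul_comm _ _

lemma norm_gradient_sq (g : E → ℝ) (x : E) :
    ‖gradient g x‖ ^ 2 = ∑ i, pd g i x ^ 2 := by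
  rw [← real_inner_self_eq_norm_sq, inner_gradients]
  simp [sq]

-- smoothness of partial derivatives
lemma contDiff_pd {m : ℕ} {g : E → ℝ} (hg : ContDiff ℝ (m+1) g) (i : Fin n) :
    ContDiff ℝ m (pd g i) := by
  exact (hg.fderiv_right (by norm_num)).clm_apply contDiff_const

lemma pd_sum {ι : Type*} (s : Finset ι) (F : ι → E → ℝ) (i : Fin n) (x : E)
    (h : ∀ j ∈ s, DifferentiableAt ℝ (F j) x) :
    pd (fun y => ∑ j ∈ s, F j y) i x = ∑ j ∈ s, pd (F j) i x := by
  simp only [pd]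
  rw [fderiv_fun_sum h]
  simp

lemma pd_mul (u v : E → ℝ) (i : Fin n) (x : E)
    (hu : DifferentiableAt ℝ u x) (hv : DifferentiableAt ℝ v x) :
    pd (fun y => u y * v y) i x = pd u i x * v x + u x * pd v i x := by
  simp only [pd]
  rw [fderiv_fun_mul hu hv]
  simp [mul_comm]
  ring

-- Schwarz symmetry
lemma schwarz {g : E → ℝ} (hg : ContDiff ℝ 2 g) (i j : Fin n) (x : E) :
    pd (pd g j) i x = pd (pd g i) j x := by
  have hd : ∀ y, HasFDerivAt g (fderiv ℝ g y) y := fun y =>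
    (hg.differentiable (by norm_num)).differentiableAt.hasFDerivAt
  have hd2 : DifferentiableAt ℝ (fderiv ℝ g) x :=
    ((hg.fderiv_right (m := 1) (by norm_num)).differentiable one_ne_zero).differentiableAt
  have hsymm := second_derivative_symmetric hd hd2.hasFDerivAt (ee i) (ee j)
  have key : ∀ a b : Fin n, pd (pd g b) a x = fderiv ℝ (fderiv ℝ g) x (ee a) (ee b) := by
    intro a b
    have hh : pd g b = fun y => fderiv ℝ g y (ee b) := rfl
    simp only [pd, hh]
    rw [fderiv_clm_apply hd2 (differentiableAt_const _)]
    simp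
  rw [key, key, hsymm]

lemma schwarz3 {g : E → ℝ} (hg : ContDiff ℝ 3 g) (i j : Fin n) (x : E) :
    pd (pd (pd g j) i) i x = pd (pd (pd g i) i) j x := by
  have hg2 : ContDiff ℝ 2 g := hg.of_le (by norm_num)
  have e1 : pd (pd g j) i = pd (pd g i) j := by
    funext y; exact schwarz hg2 i j y
  rw [e1]
  have hpdg : ContDiff ℝ 2 (pd g i) := contDiff_pd (by exact_mod_cast hg) i
  exact schwarz hpdg i j x

lemma eLap_eq (g : E → ℝ) (x : E) : eLap g x = ∑ i, pd (pd g i) i x := rfl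

lemma hess_eq (g : E → ℝ) (x : E) (i j : Fin n) : hess g x i j = pd (pd g j) i x := rfl

lemma pd_add (u v : E → ℝ) (i : Fin n) (x : E)
    (hu : DifferentiableAt ℝ u x) (hv : DifferentiableAt ℝ v x) :
    pd (fun y => u y + v y) i x = pd u i x + pd v i x := by
  simp only [pd]; rw [fderiv_fun_add hu hv]; simp

lemma pd_sub (u v : E → ℝ) (i : Fin n) (x : E)
    (hu : DifferentiableAt ℝ u x) (hv : DifferentiableAt ℝ v x) :
    pd (fun y => u y - v y) i x = pd u i x - pd v i x := by
  simp only [pd]; rw [fderiv_fun_sub hu hv]; simp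

section main
variable {f ρ : EuclideanSpace ℝ (Fin n) → ℝ}

lemma cd1 (hf : ContDiff ℝ 3 f) (j : Fin n) : ContDiff ℝ 2 (pd f j) :=
  contDiff_pd (by exact_mod_cast hf) j

lemma cd2 (hf : ContDiff ℝ 3 f) (i j : Fin n) : ContDiff ℝ 1 (pd (pd f j) i) :=
  contDiff_pd (by exact_mod_cast cd1 hf j) i

lemma d1 (hf : ContDiff ℝ 3 f) (j : Fin n) (x : E) : DifferentiableAt ℝ (pd f j) x :=
  ((cd1 hf j).differentiable (by norm_num)).differentiableAt

lemma d2 (hf : ContDiff ℝ 3 f) (i j : Fin n) (x : E) :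
    DifferentiableAt ℝ (pd (pd f j) i) x :=
  ((cd2 hf i j).differentiable one_ne_zero).differentiableAt

lemma pdG (hf : ContDiff ℝ 3 f) (i : Fin n) (y : E) :
    pd (fun w => ∑ j, pd f j w * pd f j w) i y
      = ∑ j, (pd (pd f j) i y * pd f j y + pd f j y * pd (pd f j) i y) := by
  rw [pd_sum Finset.univ _ i y (fun j _ => (d1 hf j y).fun_mul (d1 hf j y))]
  exact Finset.sum_congr rfl fun j _ => pd_mul _ _ i y (d1 hf j y) (d1 hf j y)

lemma eLapG (hf : ContDiff ℝ 3 f) (z : E) :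
    eLap (fun w => ∑ j, pd f j w * pd f j w) z
      = ∑ i, ∑ j, (2 * pd (pd f j) i z ^ 2
          + 2 * pd f j z * pd (pd (pd f i) i) j z) := by
  rw [eLap_eq]
  refine Finset.sum_congr rfl fun i _ => ?_
  have h1 : pd (fun w => ∑ j, pd f j w * pd f j w) i
      = fun y => ∑ j, (pd (pd f j) i y * pd f j y + pd f j y * pd (pd f j) i y) :=
    funext (pdG hf i)
  rw [h1]
  rw [pd_sum Finset.univ _ i z
    (fun j _ => ((d2 hf i j z).fun_mul (d1 hf j z)).fun_add ((d1 hf j z).fun_mul (d2 hf i j z)))]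
  refine Finset.sum_congr rfl fun j _ => ?_
  rw [pd_add _ _ i z ((d2 hf i j z).fun_mul (d1 hf j z)) ((d1 hf j z).fun_mul (d2 hf i j z)),
    pd_mul _ _ i z (d2 hf i j z) (d1 hf j z),
    pd_mul _ _ i z (d1 hf j z) (d2 hf i j z)]
  have h3 : pd (pd (pd f j) i) i z = pd (pd (pd f i) i) j z := schwarz3 hf i j z
  rw [h3]; ring

lemma wLap_fun (ρ f : E → ℝ) :
    wLap ρ f = fun y => (∑ i, pd (pd f i) i y) - ∑ i, pd ρ i y * pd f i y := by
  funext y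
  rw [wLap, eLap_eq, inner_gradients]

lemma pd_wLap (hρ : ContDiff ℝ 3 ρ) (hf : ContDiff ℝ 3 f) (j : Fin n) (z : E) :
    pd (wLap ρ f) j z
      = (∑ i, pd (pd (pd f i) i) j z)
        - ∑ i, (pd (pd ρ i) j z * pd f i z + pd ρ i z * pd (pd f i) j z) := by
  rw [wLap_fun]
  have hA : ∀ x : E, DifferentiableAt ℝ (fun y => ∑ i, pd (pd f i) i y) x := fun x =>
    DifferentiableAt.fun_sum (fun i _ => d2 hf i i x)
  have hB : ∀ x : E, DifferentiableAt ℝ (fun y => ∑ i, pd ρ i y * pd f i y) x := fun x =>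
    DifferentiableAt.fun_sum (fun i _ => (d1 hρ i x).fun_mul (d1 hf i x))
  rw [pd_sub _ _ j z (hA z) (hB z),
    pd_sum Finset.univ _ j z (fun i _ => d2 hf i i z),
    pd_sum Finset.univ _ j z (fun i _ => (d1 hρ i z).fun_mul (d1 hf i z))]
  congr 1
  exact Finset.sum_congr rfl fun i _ => pd_mul _ _ j z (d1 hρ i z) (d1 hf i z)

end main

lemma final_algebra {N : ℕ} (P a : Fin N → ℝ) (H R T : Fin N → Fin N → ℝ)
    (hH : ∀ i j, H j i = H i j) (hR : ∀ i j, R j i = R i j) :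
    (1/2:ℝ) * ((∑ i, ∑ j, (2 * H i j ^ 2 + 2 * P j * T j i))
        - ∑ i, a i * ∑ j, (H i j * P j + P j * H i j))
      - ∑ j, P j * ((∑ i, T j i) - ∑ i, (R j i * P i + a i * H j i))
    = (∑ i, ∑ j, H i j ^ 2) + ∑ i, ∑ j, R i j * P i * P j := by
  have hT : ∑ j, P j * ∑ i, T j i = ∑ i, ∑ j, P j * T j i := by
    simp only [Finset.mul_sum]; exact Finset.sum_comm
  have hc : ∑ i, ∑ j, (2 * H i j ^ 2 + 2 * P j * T j i)
      = 2 * (∑ i, ∑ j, H i j ^ 2) + 2 * ∑ i, ∑ j, P j * T j i := by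
    simp only [Finset.mul_sum, ← Finset.sum_add_distrib]
    exact Finset.sum_congr rfl fun i _ => Finset.sum_congr rfl fun j _ => by ring
  have ha : ∑ i, a i * ∑ j, (H i j * P j + P j * H i j)
      = 2 * ∑ i, ∑ j, a i * P j * H i j := by
    simp only [Finset.mul_sum]
    exact Finset.sum_congr rfl fun i _ => Finset.sum_congr rfl fun j _ => by ring
  have hb : ∑ j, P j * ∑ i, (R j i * P i + a i * H j i)
      = (∑ i, ∑ j, R i j * P i * P j) + ∑ i, ∑ j, a i * P j * H i j := by
    simp only [Finset.mul_sum, mul_add, Finset.sum_add_distrib]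
    congr 1
    · rw [Finset.sum_comm]
      exact Finset.sum_congr rfl fun i _ => Finset.sum_congr rfl fun j _ => by
        rw [hR i j]; ring
    · rw [Finset.sum_comm]
      exact Finset.sum_congr rfl fun i _ => Finset.sum_congr rfl fun j _ => by
        rw [hH i j]; ring
  rw [hc, ha]
  have hsplit : ∑ j, P j * ((∑ i, T j i) - ∑ i, (R j i * P i + a i * H j i))
      = (∑ j, P j * ∑ i, T j i) - ∑ j, P j * ∑ i, (R j i * P i + a i * H j i) := by
    rw [← Finset.sum_sub_distrib]
    exact Finset.sum_congr rfl fun j _ => by ring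
  rw [hsplit, hT, hb]
  ring

end

/-- **weighted flat Bochner formula.** For C³ weight `ρ` and C³ function
`f`, `Γ₂(Δ_ρ,f,f) = (1/2)Δ_ρ(‖∇f‖²) − ⟨∇f, ∇(Δ_ρ f)⟩` equals
`‖Hess f‖² + Hess ρ(∇f, ∇f)` pointwise. -/
theorem weighted_flat_bochner_formula
    {n : ℕ} (ρ f : EuclideanSpace ℝ (Fin n) → ℝ)
    (hρ : ContDiff ℝ 3 ρ) (hf : ContDiff ℝ 3 f) (z : EuclideanSpace ℝ (Fin n)) :
    (1/2 : ℝ) * wLap ρ (fun w => ‖gradient f w‖ ^ 2) z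
        - ⟪gradient f z, gradient (wLap ρ f) z⟫
      = (∑ i, ∑ j, hess f z i j ^ 2)
        + ∑ i, ∑ j, hess ρ z i j * fderiv ℝ f z (EuclideanSpace.single i 1)
            * fderiv ℝ f z (EuclideanSpace.single j 1) := by
  have hf2 : ContDiff ℝ 2 f := hf.of_le (by norm_num)
  have hρ2 : ContDiff ℝ 2 ρ := hρ.of_le (by norm_num)
  have hG : (fun w => ‖gradient f w‖ ^ 2) = fun w => ∑ j, pd f j w * pd f j w := by
    funext w
    rw [← real_inner_self_eq_norm_sq, inner_gradients]
  rw [hG]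
  have h1 : wLap ρ (fun w => ∑ j, pd f j w * pd f j w) z
      = (∑ i, ∑ j, (2 * pd (pd f j) i z ^ 2 + 2 * pd f j z * pd (pd (pd f i) i) j z))
        - ∑ i, pd ρ i z
            * ∑ j, (pd (pd f j) i z * pd f j z + pd f j z * pd (pd f j) i z) := by
    rw [wLap, eLapG hf z, inner_gradients]
    congr 1
    refine Finset.sum_congr rfl fun i _ => ?_
    rw [pdG hf i z]
  have h2 : ⟪gradient f z, gradient (wLap ρ f) z⟫
      = ∑ j, pd f j z * ((∑ i, pd (pd (pd f i) i) j z)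
          - ∑ i, (pd (pd ρ i) j z * pd f i z + pd ρ i z * pd (pd f i) j z)) := by
    rw [inner_gradients]
    exact Finset.sum_congr rfl fun j _ => by rw [pd_wLap hρ hf j z]
  rw [h1, h2]
  have hfd : ∀ i : Fin n, fderiv ℝ f z (EuclideanSpace.single i 1) = pd f i z :=
    fun i => rfl
  simp only [hess_eq, hfd]
  have hH : ∀ i j : Fin n, pd (pd f i) j z = pd (pd f j) i z :=
    fun i j => schwarz hf2 j i z
  have hR : ∀ i j : Fin n, pd (pd ρ i) j z = pd (pd ρ j) i z :=
    fun i j => schwarz hρ2 j i z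
  exact final_algebra (fun j => pd f j z) (fun i => pd ρ i z)
    (fun i j => pd (pd f j) i z) (fun i j => pd (pd ρ j) i z)
    (fun j i => pd (pd (pd f i) i) j z) hH hR
end

section
/- Let ρ : ℝⁿ → ℝ be smooth (C³) and Δ_ρ f = Δf − ⟨∇ρ, ∇f⟩. Then the coarse Ricci curvature of Δ_ρ is given explicitly by Ric_{Δ_ρ}(x,y) := Γ₂(Δ_ρ, f_{x,y}, f_{x,y})(x) = Hess ρ_x(y−x, y−x) for all x, y ∈ ℝⁿ, where Hess ρ_x(v,v) = Σ_{i,j} (∂²ρ/∂x_i∂x_j)(x) v_i v_j. -/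
open scoped RealInnerProductSpace

section Helpers

variable {n : ℕ}

local notation "E" => EuclideanSpace ℝ (Fin n)

private lemma decomp (v : E) : v = ∑ i, v i • EuclideanSpace.single i 1 := by
  ext j
  rw [show (∑ i, v i • EuclideanSpace.single i 1) j
      = ∑ i, (v i • EuclideanSpace.single i (1:ℝ)) j from by rw [WithLp.ofLp_sum, Finset.sum_apply]]
  simp [EuclideanSpace.single_apply]

private lemma clm_decomp (T : E →L[ℝ] ℝ) (v : E) :
    T v = ∑ i, v i * T (EuclideanSpace.single i 1) := by
  conv_lhs => rw [decomp v]
  rw [map_sum]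
  simp [smul_eq_mul]

private lemma hasFDerivAt_affine (v : E) (c : ℝ) (z : E) :
    HasFDerivAt (fun w : E => ⟪v, w⟫ + c) (innerSL ℝ v) z :=
  (innerSL ℝ v).hasFDerivAt.add_const c

private lemma fderiv_affine (v : E) (c : ℝ) (z : E) :
    fderiv ℝ (fun w : E => ⟪v, w⟫ + c) z = innerSL ℝ v :=
  (hasFDerivAt_affine v c z).fderiv

private lemma gradient_affine (v : E) (c : ℝ) (z : E) :
    gradient (fun w : E => ⟪v, w⟫ + c) z = v := by
  have h : HasGradientAt (fun w : E => ⟪v, w⟫ + c) v z := by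
    rw [hasGradientAt_iff_hasFDerivAt]
    have : (InnerProductSpace.toDual ℝ E) v = innerSL ℝ v := by ext w; simp
    rw [this]
    exact hasFDerivAt_affine v c z
  exact h.gradient

private lemma eLap_affine (v : E) (c : ℝ) (z : E) :
    eLap (fun w : E => ⟪v, w⟫ + c) z = 0 := by
  unfold eLap
  refine Finset.sum_eq_zero fun i _ => ?_
  have h : (fun y : E => fderiv ℝ (fun w : E => ⟪v, w⟫ + c) y (EuclideanSpace.single i 1))
      = fun _ : E => ⟪v, EuclideanSpace.single i 1⟫ := by
    funext y; rw [fderiv_affine]; rfl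
  rw [h, fderiv_fun_const]
  rfl

private lemma fderiv_eq_inner_gradient {u : E → ℝ} {z : E} (hu : DifferentiableAt ℝ u z)
    (w : E) : fderiv ℝ u z w = ⟪gradient u z, w⟫ := by
  rw [hu.hasGradientAt.hasFDerivAt.fderiv]
  exact InnerProductSpace.toDual_apply_apply

private lemma wLap_eq {ρ u : E → ℝ} {z : E} (hu : DifferentiableAt ℝ u z) :
    wLap ρ u z = eLap u z - fderiv ℝ u z (gradient ρ z) := by
  unfold wLap
  rw [fderiv_eq_inner_gradient hu, real_inner_comm]

private lemma eLap_const (k : ℝ) (z : E) : eLap (fun _ : E => k) z = 0 := by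
  unfold eLap
  refine Finset.sum_eq_zero fun i _ => ?_
  have h : (fun y : E => fderiv ℝ (fun _ : E => k) y (EuclideanSpace.single i 1))
      = fun _ : E => 0 := by
    funext y; rw [fderiv_fun_const]; rfl
  rw [h, fderiv_fun_const]
  rfl

private lemma wLap_const (ρ : E → ℝ) (k : ℝ) (z : E) : wLap ρ (fun _ : E => k) z = 0 := by
  unfold wLap
  rw [eLap_const, gradient_fun_const]
  simp

private lemma fderiv_apply_diff {u : E → ℝ} (hu : ContDiff ℝ 2 u) (w : E) :
    Differentiable ℝ (fun y : E => fderiv ℝ u y w) := by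
  have h1 : ContDiff ℝ 1 (fderiv ℝ u) := hu.fderiv_right (by norm_num)
  exact ((ContinuousLinearMap.apply ℝ ℝ w).contDiff.comp h1).differentiable one_ne_zero

private lemma eLap_mul_affine {u : E → ℝ} (hu : ContDiff ℝ 2 u) (v : E) (c : ℝ) (z : E) :
    eLap (fun w : E => u w * (⟪v, w⟫ + c)) z
      = (⟪v, z⟫ + c) * eLap u z + 2 * fderiv ℝ u z v := by
  have hud : Differentiable ℝ u := hu.differentiable (by norm_num)
  have hstep : ∀ i : Fin n,
      (fun y : E => fderiv ℝ (fun w : E => u w * (⟪v, w⟫ + c)) y (EuclideanSpace.single i 1))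
      = fun y : E => u y * ⟪v, EuclideanSpace.single i 1⟫
          + (⟪v, y⟫ + c) * fderiv ℝ u y (EuclideanSpace.single i 1) := by
    intro i; funext y
    rw [fderiv_fun_mul (hud y) (hasFDerivAt_affine v c y).differentiableAt, fderiv_affine]
    rfl
  unfold eLap
  have hterm : ∀ i : Fin n,
      fderiv ℝ (fun y : E => fderiv ℝ (fun w : E => u w * (⟪v, w⟫ + c)) y
          (EuclideanSpace.single i 1)) z (EuclideanSpace.single i 1)
      = ⟪v, EuclideanSpace.single i 1⟫ * fderiv ℝ u z (EuclideanSpace.single i 1)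
        + ((⟪v, z⟫ + c) * fderiv ℝ (fun y : E => fderiv ℝ u y (EuclideanSpace.single i 1)) z
            (EuclideanSpace.single i 1)
          + fderiv ℝ u z (EuclideanSpace.single i 1) * ⟪v, EuclideanSpace.single i 1⟫) := by
    intro i
    rw [hstep i]
    have hd1 : DifferentiableAt ℝ (fun y : E => u y * ⟪v, EuclideanSpace.single i 1⟫) z :=
      (hud z).mul_const _
    have hd2 : DifferentiableAt ℝ
        (fun y : E => (⟪v, y⟫ + c) * fderiv ℝ u y (EuclideanSpace.single i 1)) z :=
      ((hasFDerivAt_affine v c z).differentiableAt).mul (fderiv_apply_diff hu _ z)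
    rw [fderiv_fun_add hd1 hd2, ContinuousLinearMap.add_apply]
    congr 1
    · rw [fderiv_mul_const (hud z)]
      simp [mul_comm]
    · rw [fderiv_fun_mul ((hasFDerivAt_affine v c z).differentiableAt) (fderiv_apply_diff hu _ z),
        fderiv_affine]
      simp [mul_comm]
  rw [Finset.sum_congr rfl (fun i _ => hterm i)]
  have hsum : ∑ i, ⟪v, EuclideanSpace.single i (1:ℝ)⟫ * fderiv ℝ u z (EuclideanSpace.single i 1)
      = fderiv ℝ u z v := by
    rw [clm_decomp (fderiv ℝ u z) v]
    refine Finset.sum_congr rfl fun i _ => ?_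
    congr 1
    simp [EuclideanSpace.inner_single_right]
  rw [Finset.sum_add_distrib, Finset.sum_add_distrib, ← Finset.mul_sum]
  have hsum2 : ∑ i, fderiv ℝ u z (EuclideanSpace.single i 1) * ⟪v, EuclideanSpace.single i (1:ℝ)⟫
      = fderiv ℝ u z v := by
    rw [← hsum]; exact Finset.sum_congr rfl fun i _ => mul_comm _ _
  rw [hsum, hsum2]
  ring

private lemma carre_wLap_affine (ρ : E → ℝ) {u : E → ℝ} (hu : ContDiff ℝ 2 u) (v : E) (c : ℝ)
    (z : E) : carre (wLap ρ) u (fun w : E => ⟪v, w⟫ + c) z = fderiv ℝ u z v := by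
  have hud : Differentiable ℝ u := hu.differentiable (by norm_num)
  set g := gradient ρ z with hg
  unfold carre
  rw [wLap_eq (u := fun w => u w * (⟪v, w⟫ + c)) ((hud z).mul (hasFDerivAt_affine v c z).differentiableAt),
    wLap_eq (hud z), wLap_eq (hasFDerivAt_affine v c z).differentiableAt,
    eLap_mul_affine hu, eLap_affine, fderiv_affine,
    fderiv_fun_mul (hud z) (hasFDerivAt_affine v c z).differentiableAt, fderiv_affine]
  simp only [ContinuousLinearMap.add_apply, ContinuousLinearMap.smul_apply, smul_eq_mul,
    innerSL_apply_apply]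
  ring

end Helpers

private lemma testFn_eq {n : ℕ} (x y : EuclideanSpace ℝ (Fin n)) :
    testFn x y = fun z : EuclideanSpace ℝ (Fin n) =>
      ⟪y - x, z⟫ + ((dist x y)^2 + ‖x‖^2 - ‖y‖^2)/2 := by
  funext z
  unfold testFn
  rw [dist_eq_norm y z, dist_eq_norm z x, @norm_sub_sq_real, @norm_sub_sq_real,
    inner_sub_left, real_inner_comm z x]
  ring

private lemma wLap_affine_eq {n : ℕ} {ρ : EuclideanSpace ℝ (Fin n) → ℝ}
    (hρ : Differentiable ℝ ρ) (v : EuclideanSpace ℝ (Fin n)) (c : ℝ) :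
    wLap ρ (fun w => ⟪v, w⟫ + c) = fun z => -(fderiv ℝ ρ z v) := by
  funext z
  unfold wLap
  rw [eLap_affine, gradient_affine, fderiv_eq_inner_gradient (hρ z)]
  ring

/-- For a C³ weight `ρ`, the coarse Ricci curvature of the weighted
Laplacian is `Ric_{Δ_ρ}(x,y) = Hess ρ_x(y−x, y−x)` for all `x, y ∈ ℝⁿ`. -/
theorem coarse_ricci_of_weighted_laplacian_eq_hessian
    {n : ℕ} (ρ : EuclideanSpace ℝ (Fin n) → ℝ) (hρ : ContDiff ℝ 3 ρ)
    (x y : EuclideanSpace ℝ (Fin n)) :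
    cRic (wLap ρ) x y = ∑ i, ∑ j, hess ρ x i j * (y - x) i * (y - x) j := by
  set v : EuclideanSpace ℝ (Fin n) := y - x with hv
  set c : ℝ := ((dist x y)^2 + ‖x‖^2 - ‖y‖^2)/2 with hc
  have hρd : Differentiable ℝ ρ := hρ.differentiable (by norm_num)
  have hf2 : ContDiff ℝ 2 (fun z : EuclideanSpace ℝ (Fin n) => ⟪v, z⟫ + c) :=
    (innerSL ℝ v).contDiff.add contDiff_const
  have hρ2 : ContDiff ℝ 2 (fun z => -(fderiv ℝ ρ z v)) := by
    have h1 : ContDiff ℝ 2 (fderiv ℝ ρ) := hρ.fderiv_right (by norm_num)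
    exact ((ContinuousLinearMap.apply ℝ ℝ v).contDiff.comp h1).neg
  rw [cRic, testFn_eq]
  unfold gamma2
  have hcar : carre (wLap ρ) (fun z => ⟪v, z⟫ + c) (fun z => ⟪v, z⟫ + c)
      = fun _ => ⟪v, v⟫ := by
    funext z
    rw [carre_wLap_affine ρ hf2 v c z, fderiv_affine]
    rfl
  have hLf : wLap ρ (fun z => ⟪v, z⟫ + c) = fun z => -(fderiv ℝ ρ z v) :=
    wLap_affine_eq hρd v c
  rw [hcar, hLf, carre_wLap_affine ρ hρ2 v c x, wLap_const]
  have hneg : fderiv ℝ (fun z => -(fderiv ℝ ρ z v)) x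
      = -(fderiv ℝ (fun z => fderiv ℝ ρ z v) x) :=
    fderiv_neg
  have hD : fderiv ℝ (fun z => fderiv ℝ ρ z v) x v
      = ∑ i, ∑ j, hess ρ x i j * v i * v j := by
    have hfun : (fun z => fderiv ℝ ρ z v)
        = fun z => ∑ j, v j * fderiv ℝ ρ z (EuclideanSpace.single j 1) :=
      funext fun z => clm_decomp _ v
    have hρ2' : ContDiff ℝ 2 ρ := hρ.of_le (by norm_num)
    have hdiff : ∀ j ∈ Finset.univ, DifferentiableAt ℝ
        (fun z => v j * fderiv ℝ ρ z (EuclideanSpace.single j (1:ℝ))) x := fun j _ =>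
      (fderiv_apply_diff hρ2' _ x).const_mul _
    rw [hfun, fderiv_fun_sum hdiff, ContinuousLinearMap.sum_apply]
    rw [Finset.sum_comm]
    refine Finset.sum_congr rfl fun j _ => ?_
    rw [fderiv_const_mul (fderiv_apply_diff hρ2' _ x), ContinuousLinearMap.smul_apply,
      smul_eq_mul, clm_decomp (fderiv ℝ (fun z => fderiv ℝ ρ z (EuclideanSpace.single j 1)) x) v,
      Finset.mul_sum]
    refine Finset.sum_congr rfl fun i _ => ?_
    unfold hess
    ring
  rw [hneg, ContinuousLinearMap.neg_apply, hD]
  ring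
end
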